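/- arXiv:2504.15542 — 4 statements merged into one kernel-verified Lean document; each statement's English description precedes it below -/
import Mathlib

section
/- Let V be a finite-dimensional real inner product space, let C ⊆ V be a closed convex cone (a closed convex set containing 0 and stable under multiplication by nonnegative scalars), and let K = {ν ∈ V : ⟨c, ν⟩ ≤ 0 for all c ∈ C} be its polar cone. Let S, T ⊆ V be nonempty finite sets such that for every ν ∈ K one has max_{s ∈ S} ⟨s, ν⟩ = max_{t ∈ T} ⟨t, ν⟩. Then the convex hulls of the Minkowski sums coincide: convexHull ℝ (S + C) = convexHull ℝ (T + C). -/
open scoped Pointwise RealInnerProductSpace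

private lemma aux_subset {V : Type*} [NormedAddCommGroup V] [InnerProductSpace ℝ V]
    [FiniteDimensional ℝ V]
    (C : Set V) (hCclosed : IsClosed C) (hCconv : Convex ℝ C) (hC0 : (0 : V) ∈ C)
    (hCcone : ∀ c ∈ C, ∀ r : ℝ, 0 ≤ r → r • c ∈ C)
    (S T : Finset V) (hS : S.Nonempty) (hT : T.Nonempty)
    (hle : ∀ ν : V, (∀ c ∈ C, ⟪c, ν⟫ ≤ 0) →
      T.sup' hT (fun t => ⟪t, ν⟫) ≤ S.sup' hS (fun s => ⟪s, ν⟫)) :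
    convexHull ℝ ((T : Set V) + C) ⊆ convexHull ℝ ((S : Set V) + C) := by
  have hA : convexHull ℝ ((S : Set V) + C) = convexHull ℝ (S : Set V) + C := by
    rw [convexHull_add, hCconv.convexHull_eq]
  have hB : convexHull ℝ ((T : Set V) + C) = convexHull ℝ (T : Set V) + C := by
    rw [convexHull_add, hCconv.convexHull_eq]
  rw [hA, hB]
  have hAconv : Convex ℝ (convexHull ℝ (S : Set V) + C) :=
    (convex_convexHull ℝ _).add hCconv
  have hAclosed : IsClosed (convexHull ℝ (S : Set V) + C) :=
    hCclosed.add_left_of_isCompact (S.finite_toSet.isCompact_convexHull (𝕜 := ℝ))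
  intro x hx
  by_contra hxA
  obtain ⟨f, u, hfu, hux⟩ := geometric_hahn_banach_closed_point hAconv hAclosed hxA
  -- membership of s + r • c in A
  have hmem : ∀ s ∈ S, ∀ c ∈ C, s + c ∈ convexHull ℝ (S : Set V) + C := by
    intro s hs c hc
    exact Set.add_mem_add (subset_convexHull ℝ _ hs) hc
  -- f c ≤ 0 for c ∈ C
  have hfC : ∀ c ∈ C, f c ≤ 0 := by
    intro c hc
    by_contra h
    push_neg at h
    obtain ⟨s₀, hs₀⟩ := hS
    obtain ⟨r, hr⟩ := exists_nat_gt ((u - f s₀) / f c)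
    have hrc : (r : ℝ) • c ∈ C := hCcone c hc r (Nat.cast_nonneg r)
    have := hfu _ (hmem s₀ hs₀ _ hrc)
    rw [map_add, map_smul] at this
    have h1 : (u - f s₀) / f c * f c < (r : ℝ) * f c := by
      exact mul_lt_mul_of_pos_right hr h
    rw [div_mul_cancel₀ _ (ne_of_gt h)] at h1
    simp only [smul_eq_mul] at this
    linarith
  set ν := (InnerProductSpace.toDual ℝ V).symm f with hν
  have hfν : ∀ y : V, f y = ⟪y, ν⟫ := by
    intro y
    rw [real_inner_comm]
    exact (InnerProductSpace.toDual_symm_apply).symm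
  have hνK : ∀ c ∈ C, ⟪c, ν⟫ ≤ 0 := fun c hc => (hfν c) ▸ hfC c hc
  -- x ∈ convexHull T + C, so f x ≤ max_t f t
  obtain ⟨y, hy, c, hc, rfl⟩ := hx
  have hyT : f y ≤ T.sup' hT (fun t => ⟪t, ν⟫) := by
    have hsub : convexHull ℝ (T : Set V) ⊆ {z | f z ≤ T.sup' hT (fun t => ⟪t, ν⟫)} := by
      apply convexHull_min
      · intro t ht
        simp only [Set.mem_setOf_eq, hfν]
        exact Finset.le_sup' (fun t => ⟪t, ν⟫) ht
      · exact convex_halfSpace_le ⟨fun a b => map_add f a b, fun r a => map_smul f r a⟩ _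
    exact hsub hy
  have hxle : f (y + c) ≤ T.sup' hT (fun t => ⟪t, ν⟫) := by
    rw [map_add]
    have := hfC c hc
    linarith
  -- but max_s f s < u < f x and max_t ≤ max_s
  have hSlt : S.sup' hS (fun s => ⟪s, ν⟫) < u := by
    apply Finset.sup'_lt_iff hS |>.mpr
    intro s hs
    have := hfu (s + 0) (by simpa using hmem s hs 0 hC0)
    rw [← hfν s]
    simpa using this
  have := hle ν hνK
  linarith

/-- Let `V` be a finite-dimensional real inner product space,
`C ⊆ V` a closed convex cone, and `K = {ν : ∀ c ∈ C, ⟪c, ν⟫ ≤ 0}` its polar cone.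
If `S, T` are nonempty finite subsets of `V` such that for every `ν ∈ K` one has
`max_{s ∈ S} ⟪s, ν⟫ = max_{t ∈ T} ⟪t, ν⟫`, then
`convexHull ℝ (S + C) = convexHull ℝ (T + C)`. -/
theorem stmt4 {V : Type*} [NormedAddCommGroup V] [InnerProductSpace ℝ V]
    [FiniteDimensional ℝ V]
    (C : Set V) (hCclosed : IsClosed C) (hCconv : Convex ℝ C) (hC0 : (0 : V) ∈ C)
    (hCcone : ∀ c ∈ C, ∀ r : ℝ, 0 ≤ r → r • c ∈ C)
    (S T : Finset V) (hS : S.Nonempty) (hT : T.Nonempty)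
    (hmax : ∀ ν : V, (∀ c ∈ C, ⟪c, ν⟫ ≤ 0) →
      S.sup' hS (fun s => ⟪s, ν⟫) = T.sup' hT (fun t => ⟪t, ν⟫)) :
    convexHull ℝ ((S : Set V) + C) = convexHull ℝ ((T : Set V) + C) := by
  apply Set.Subset.antisymm
  · exact aux_subset C hCclosed hCconv hC0 hCcone T S hT hS
      (fun ν hν => le_of_eq (hmax ν hν))
  · exact aux_subset C hCclosed hCconv hC0 hCcone S T hS hT
      (fun ν hν => le_of_eq (hmax ν hν).symm)
end

section
/- Let V be a finite-dimensional real inner product space and let C ⊆ V be a closed convex cone (a closed convex set containing 0 and stable under multiplication by nonnegative scalars) that is pointed, i.e. C ∩ (−C) = {0}. Let Γ be a finite group acting on V by linear automorphisms, and for μ ∈ V write Γμ = {σ·μ : σ ∈ Γ} for its orbit. If μ, μ′ ∈ V satisfy convexHull ℝ (Γμ + C) = convexHull ℝ (Γμ′ + C), then μ and μ′ lie in the same Γ-orbit, i.e. Γμ = Γμ′. -/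
open scoped Pointwise RealInnerProductSpace

/-- Auxiliary: a compact convex nonempty set plus a pointed closed convex cone has an
extreme point.  Induction on the rank of the span of the cone. -/
lemma extreme_aux {V : Type*} [NormedAddCommGroup V] [InnerProductSpace ℝ V]
    [FiniteDimensional ℝ V] (n : ℕ) :
    ∀ C : Set V, Module.finrank ℝ (Submodule.span ℝ C) ≤ n → IsClosed C → Convex ℝ C →
      (0 : V) ∈ C → (∀ c ∈ C, ∀ r : ℝ, 0 ≤ r → r • c ∈ C) → C ∩ (-C) = {0} →
      ∀ K : Set V, IsCompact K → Convex ℝ K → K.Nonempty →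
      ((K + C).extremePoints ℝ).Nonempty := by
  induction n with
  | zero =>
    intro C hrank hCclosed hCconv hC0 hCcone hCpointed K hK hKconv hKne
    have hspan : Submodule.span ℝ C = ⊥ := by
      have := Nat.le_zero.1 hrank
      exact Submodule.finrank_eq_zero.1 this
    have hCeq : C = {0} := by
      apply subset_antisymm
      · intro c hc
        have : c ∈ Submodule.span ℝ C := Submodule.subset_span hc
        rw [hspan] at this
        simpa using this
      · simpa using hC0
    have : K + C = K := by
      rw [hCeq]
      simpa using add_zero K
    rw [this]
    exact hK.extremePoints_nonempty hKne
  | succ n ih =>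
    intro C hrank hCclosed hCconv hC0 hCcone hCpointed K hK hKconv hKne
    by_cases htriv : C ⊆ {0}
    · have hCeq : C = {0} := subset_antisymm htriv (by simpa using hC0)
      have : K + C = K := by
        rw [hCeq]
        simpa using add_zero K
      rw [this]
      exact hK.extremePoints_nonempty hKne
    · -- pick a nonzero element of C
      obtain ⟨c₀, hc₀C, hc₀⟩ : ∃ c₀ ∈ C, c₀ ≠ 0 := by
        rcases Set.not_subset.1 htriv with ⟨c₀, hc₀C, h⟩
        exact ⟨c₀, hc₀C, by simpa using h⟩
      -- separate -c₀ from C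
      have hnc₀ : -c₀ ∉ C := by
        intro h
        have : c₀ ∈ C ∩ (-C) := ⟨hc₀C, by simpa using h⟩
        rw [hCpointed] at this
        exact hc₀ (by simpa using this)
      obtain ⟨f, u, hfu, hfC⟩ := geometric_hahn_banach_point_closed hCconv hCclosed hnc₀
      have hu0 : u < 0 := lt_of_lt_of_le (hfC 0 hC0) (by simp)
      -- f is nonnegative on C
      have hfCnonneg : ∀ c ∈ C, 0 ≤ f c := by
        intro c hc
        by_contra h
        push_neg at h
        have hr : (0:ℝ) ≤ u / f c := by
          rw [div_nonneg_iff]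
          exact Or.inr ⟨hu0.le, h.le⟩
        have := hfC _ (hCcone c hc _ hr)
        rw [map_smul, smul_eq_mul, div_mul_cancel₀ u h.ne] at this
        exact lt_irrefl u this
      have hfc₀ : 0 < f c₀ := by
        have : f (-c₀) < 0 := hfu.trans hu0
        simpa using this
      -- the negated functional
      set g : V →L[ℝ] ℝ := -f with hg
      have hgC : ∀ c ∈ C, g c ≤ 0 := by
        intro c hc; simp only [hg, ContinuousLinearMap.neg_apply, neg_nonpos]
        exact hfCnonneg c hc
      have hgc₀ : g c₀ < 0 := by
        simp only [hg, ContinuousLinearMap.neg_apply, neg_neg, neg_lt, neg_zero]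
        exact hfc₀
      -- maximum of g over K
      obtain ⟨a, haK, hamax⟩ := hK.exists_isMaxOn hKne g.continuous.continuousOn
      set S : Set V := K + C with hSdef
      have hmax : ∀ y ∈ S, g y ≤ g a := by
        rintro y hy
        rcases Set.mem_add.1 hy with ⟨x, hx, c, hc, rfl⟩
        have h1 : g x ≤ g a := hamax hx
        have h2 : g c ≤ 0 := hgC c hc
        have : g (x + c) = g x + g c := map_add g x c
        linarith [this]
      have haS : a ∈ S := Set.mem_add.2 ⟨a, haK, 0, hC0, add_zero a⟩
      set F : Set V := {x ∈ S | ∀ y ∈ S, g y ≤ g x} with hFdef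
      have hexp : IsExposed ℝ S F := fun _ => ⟨g, rfl⟩
      -- the maximal face decomposes
      set K' : Set V := {x ∈ K | g x = g a} with hK'def
      set C' : Set V := C ∩ g ⁻¹' {0} with hC'def
      have hFeq : F = K' + C' := by
        apply subset_antisymm
        · rintro s ⟨hsS, hsmax⟩
          rcases Set.mem_add.1 hsS with ⟨x, hx, c, hc, rfl⟩
          have h1 : g x ≤ g a := hamax hx
          have h2 : g c ≤ 0 := hgC c hc
          have h3 : g a ≤ g (x + c) := hsmax a haS
          have hadd : g (x + c) = g x + g c := map_add g x c
          have hgx : g x = g a := by linarith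
          have hgc : g c = 0 := by linarith
          exact Set.mem_add.2 ⟨x, ⟨hx, hgx⟩, c, ⟨hc, hgc⟩, rfl⟩
        · rintro s hs
          rcases Set.mem_add.1 hs with ⟨x, ⟨hxK, hgx⟩, c, ⟨hcC, hgc⟩, rfl⟩
          refine ⟨Set.mem_add.2 ⟨x, hxK, c, hcC, rfl⟩, ?_⟩
          intro y hy
          have : g (x + c) = g x + g c := map_add g x c
          have hgc0 : g c = 0 := hgc
          have := hmax y hy
          rw [map_add g x c, hgc0, add_zero, hgx]
          exact hmax y hy
      -- properties of K'
      have hK'cpt : IsCompact K' := by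
        have : K' = K ∩ g ⁻¹' {g a} := rfl
        rw [this]
        exact hK.inter_right (isClosed_singleton.preimage g.continuous)
      have hyper : ∀ r : ℝ, Convex ℝ (g ⁻¹' {r}) := by
        intro r x hx y hy p q hp hq hpq
        simp only [Set.mem_preimage, Set.mem_singleton_iff] at hx hy ⊢
        rw [map_add, map_smul, map_smul, hx, hy, smul_eq_mul, smul_eq_mul, ← add_mul, hpq,
          one_mul]
      have hK'conv : Convex ℝ K' := hKconv.inter (hyper (g a))
      have hK'ne : K'.Nonempty := ⟨a, haK, rfl⟩
      -- properties of C'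
      have hC'closed : IsClosed C' :=
        hCclosed.inter (isClosed_singleton.preimage g.continuous)
      have hC'conv : Convex ℝ C' := hCconv.inter (hyper 0)
      have hC'0 : (0 : V) ∈ C' := ⟨hC0, by simp⟩
      have hC'cone : ∀ c ∈ C', ∀ r : ℝ, 0 ≤ r → r • c ∈ C' := by
        rintro c ⟨hcC, hgc⟩ r hr
        refine ⟨hCcone c hcC r hr, ?_⟩
        have : g c = 0 := hgc
        simp [map_smul, this]
      have hC'pointed : C' ∩ (-C') = {0} := by
        apply subset_antisymm
        · intro x hx
          have : x ∈ C ∩ (-C) := by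
            refine ⟨hx.1.1, ?_⟩
            rcases hx.2 with h
            rw [Set.mem_neg] at h ⊢
            exact h.1
          rw [hCpointed] at this
          exact this
        · intro x hx
          simp only [Set.mem_singleton_iff] at hx
          subst hx
          refine ⟨hC'0, ?_⟩
          rw [Set.mem_neg, neg_zero]
          exact hC'0
      -- rank decreases
      have hrank' : Module.finrank ℝ (Submodule.span ℝ C') ≤ n := by
        have hle : Submodule.span ℝ C' ≤ Submodule.span ℝ C :=
          Submodule.span_mono Set.inter_subset_left
        have hker : Submodule.span ℝ C' ≤ LinearMap.ker (g : V →ₗ[ℝ] ℝ) := by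
          rw [Submodule.span_le]
          intro x hx
          exact hx.2
        have hlt : Submodule.span ℝ C' < Submodule.span ℝ C := by
          refine lt_of_le_of_ne hle ?_
          intro h
          have : c₀ ∈ Submodule.span ℝ C' := by
            rw [h]; exact Submodule.subset_span hc₀C
          have : g c₀ = 0 := hker this
          exact absurd this (ne_of_lt hgc₀)
        have := Submodule.finrank_lt_finrank_of_lt hlt
        omega
      -- induction hypothesis
      obtain ⟨e, he⟩ := ih C' hrank' hC'closed hC'conv hC'0 hC'cone hC'pointed
        K' hK'cpt hK'conv hK'ne
      rw [← hFeq] at he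
      exact ⟨e, hexp.isExtreme.extremePoints_subset_extremePoints he⟩

/-- Auxiliary: an extreme point of `K + C` with `C` a convex cone containing `0` lies in `K`,
and is an extreme point of `K`. -/
lemma extreme_mem_aux {V : Type*} [NormedAddCommGroup V] [InnerProductSpace ℝ V]
    (C : Set V) (hC0 : (0 : V) ∈ C)
    (hCcone : ∀ c ∈ C, ∀ r : ℝ, 0 ≤ r → r • c ∈ C)
    (K : Set V) {e : V} (he : e ∈ (K + C).extremePoints ℝ) :
    e ∈ K.extremePoints ℝ := by
  obtain ⟨x, hx, c, hc, hxc⟩ := Set.mem_add.1 (extremePoints_subset he)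
  have hxS : x ∈ K + C := Set.mem_add.2 ⟨x, hx, 0, hC0, add_zero x⟩
  have hc0 : c = 0 := by
    by_contra hcne
    have h2c : (2:ℝ) • c ∈ C := hCcone c hc 2 (by norm_num)
    have hx2S : x + (2:ℝ) • c ∈ K + C := Set.mem_add.2 ⟨x, hx, (2:ℝ) • c, h2c, rfl⟩
    have hseg : e ∈ openSegment ℝ x (x + (2:ℝ) • c) := by
      refine ⟨1/2, 1/2, by norm_num, by norm_num, by norm_num, ?_⟩
      rw [← hxc]
      module
    have := he.2 hxS hx2S hseg
    apply hcne
    have : x + c = x := by rw [hxc, this]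
    simpa using this
  have heK : e ∈ K := by rw [← hxc, hc0, add_zero]; exact hx
  have hKS : K ⊆ K + C := fun y hy => Set.mem_add.2 ⟨y, hy, 0, hC0, add_zero y⟩
  exact inter_extremePoints_subset_extremePoints_of_subset hKS ⟨heK, he⟩

/-- Let `V` be a finite-dimensional real inner product space and
`C ⊆ V` a pointed closed convex cone (`C ∩ (−C) = {0}`).  Let `Γ` be a finite group
acting on `V` by linear automorphisms via `ρ : Γ →* (V ≃ₗ[ℝ] V)`.  If
`convexHull ℝ (Γμ + C) = convexHull ℝ (Γμ′ + C)` then `Γμ = Γμ′`, i.e. `μ` and `μ′`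
lie in the same `Γ`-orbit. -/
theorem stmt5 {V : Type*} [NormedAddCommGroup V] [InnerProductSpace ℝ V]
    [FiniteDimensional ℝ V]
    (C : Set V) (hCclosed : IsClosed C) (hCconv : Convex ℝ C) (hC0 : (0 : V) ∈ C)
    (hCcone : ∀ c ∈ C, ∀ r : ℝ, 0 ≤ r → r • c ∈ C)
    (hCpointed : C ∩ (-C) = {0})
    {Γ : Type*} [Group Γ] [Finite Γ] (ρ : Γ →* (V ≃ₗ[ℝ] V))
    (μ μ' : V)
    (hconv : convexHull ℝ ((Set.range fun σ : Γ => ρ σ μ) + C) =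
      convexHull ℝ ((Set.range fun σ : Γ => ρ σ μ') + C)) :
    (Set.range fun σ : Γ => ρ σ μ) = (Set.range fun σ : Γ => ρ σ μ') := by
  classical
  set A : Set V := Set.range fun σ : Γ => ρ σ μ with hA
  set B : Set V := Set.range fun σ : Γ => ρ σ μ' with hB
  have hkey : ∀ (g h : Γ) (v : V), ρ (g * h) v = ρ g (ρ h v) := by
    intro g h v
    rw [map_mul]
    rfl
  -- Minkowski sum description of the hulls
  have hSA : convexHull ℝ (A + C) = convexHull ℝ A + C := by
    rw [convexHull_add, hCconv.convexHull_eq]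
  have hSB : convexHull ℝ (B + C) = convexHull ℝ B + C := by
    rw [convexHull_add, hCconv.convexHull_eq]
  -- find an extreme point of the common set
  have hAfin : A.Finite := Set.finite_range _
  have hAne : A.Nonempty := ⟨ρ 1 μ, 1, rfl⟩
  obtain ⟨e, he⟩ := extreme_aux (Module.finrank ℝ (Submodule.span ℝ C)) C le_rfl
    hCclosed hCconv hC0 hCcone hCpointed (convexHull ℝ A)
    (hAfin.isCompact_convexHull (𝕜 := ℝ)) (convex_convexHull ℝ A)
    (hAne.mono (subset_convexHull ℝ A))
  have heA : e ∈ A := by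
    have := extreme_mem_aux C hC0 hCcone (convexHull ℝ A) he
    exact extremePoints_convexHull_subset this
  have heB : e ∈ B := by
    have hEq : convexHull ℝ A + C = convexHull ℝ B + C := by
      rw [← hSA, ← hSB, hconv]
    rw [hEq] at he
    have := extreme_mem_aux C hC0 hCcone (convexHull ℝ B) he
    exact extremePoints_convexHull_subset this
  -- the orbits meet, hence coincide
  obtain ⟨σ, hσ⟩ := heA
  obtain ⟨τ, hτ⟩ := heB
  have hσ' : ρ σ μ = e := hσ
  have hτ' : ρ τ μ' = e := hτ
  have hστ : ρ σ μ = ρ τ μ' := by rw [hσ', hτ']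
  have hμ : μ = ρ (σ⁻¹ * τ) μ' := by
    rw [hkey, ← hστ, ← hkey, inv_mul_cancel, map_one]
    rfl
  ext x
  constructor
  · rintro ⟨g, rfl⟩
    refine ⟨g * (σ⁻¹ * τ), ?_⟩
    show ρ (g * (σ⁻¹ * τ)) μ' = ρ g μ
    rw [hkey, ← hμ]
  · rintro ⟨g, rfl⟩
    refine ⟨g * (τ⁻¹ * σ), ?_⟩
    have hμ' : μ' = ρ (τ⁻¹ * σ) μ := by
      rw [hkey, hστ, ← hkey, inv_mul_cancel, map_one]
      rfl
    show ρ (g * (τ⁻¹ * σ)) μ = ρ g μ'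
    rw [hkey, ← hμ']
end

section
/- Let A be a group, Q ≤ A a subgroup, P a normal subgroup of Q, Γ ≤ Q a subgroup, K ≤ A a subgroup, and c ∈ A. Set H = Q ∩ cKc⁻¹, a subgroup of Q, and note that PH = {pη : p ∈ P, η ∈ H} is a subgroup of Q since P is normal in Q. Let X be a set with a left Γ-action. Consider the action of (Γ ∩ PH) × H on the set X × PH by (γ, η)·(x, α) = (γ·x, γαη⁻¹), and the action of Γ × K on the set X × ΓPcK (where ΓPcK = {γpck : γ ∈ Γ, p ∈ P, k ∈ K} ⊆ A) by (γ, k)·(x, s) = (γ·x, γsk⁻¹). Then the assignment (x, α) ↦ (x, αc) descends to a well-defined bijection from the orbit space of X × PH under (Γ ∩ PH) × H onto the orbit space of X × ΓPcK under Γ × K. -/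
/-- `H = Q ∩ cKc⁻¹`, as a subset of the ambient group. -/
def Hset {A : Type*} [Group A] (Q K : Subgroup A) (c : A) : Set A :=
  {a | a ∈ Q ∧ ∃ k ∈ K, a = c * k * c⁻¹}

/-- `PH = {p·η : p ∈ P, η ∈ H}`. -/
def PHset {A : Type*} [Group A] (P Q K : Subgroup A) (c : A) : Set A :=
  {a | ∃ p ∈ P, ∃ η ∈ Hset Q K c, a = p * η}

/-- `ΓPcK = {γ·p·c·k : γ ∈ Γ, p ∈ P, k ∈ K}`. -/
def GammaPcKset {A : Type*} [Group A] (Γ P K : Subgroup A) (c : A) : Set A :=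
  {s | ∃ γ ∈ Γ, ∃ p ∈ P, ∃ k ∈ K, s = γ * p * c * k}

/-- The orbit relation of the action of `(Γ ∩ PH) × H` on `X × PH`, given by
`(γ, η) · (x, α) = (γ·x, γαη⁻¹)`. -/
def relPH {A : Type*} [Group A] (P Q Γ K : Subgroup A) (c : A)
    {X : Type*} [MulAction Γ X] :
    (X × ↥(PHset P Q K c)) → (X × ↥(PHset P Q K c)) → Prop :=
  fun w w' => ∃ γ : Γ, (γ : A) ∈ PHset P Q K c ∧ ∃ η ∈ Hset Q K c,
    w'.1 = γ • w.1 ∧ (w'.2 : A) = (γ : A) * (w.2 : A) * η⁻¹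

/-- The orbit relation of the action of `Γ × K` on `X × ΓPcK`, given by
`(γ, k) · (x, s) = (γ·x, γsk⁻¹)`. -/
def relGammaPcK {A : Type*} [Group A] (P Γ K : Subgroup A) (c : A)
    {X : Type*} [MulAction Γ X] :
    (X × ↥(GammaPcKset Γ P K c)) → (X × ↥(GammaPcKset Γ P K c)) → Prop :=
  fun w w' => ∃ γ : Γ, ∃ k ∈ K,
    w'.1 = γ • w.1 ∧ (w'.2 : A) = (γ : A) * (w.2 : A) * k⁻¹

section Aux
variable {A : Type*} [Group A] {P Q Γ K : Subgroup A} {c : A}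

lemma Hset_one : (1 : A) ∈ Hset Q K c := ⟨one_mem Q, 1, one_mem K, by group⟩

lemma Hset_mul {a b : A} (ha : a ∈ Hset Q K c) (hb : b ∈ Hset Q K c) :
    a * b ∈ Hset Q K c := by
  obtain ⟨haQ, k, hk, rfl⟩ := ha
  obtain ⟨hbQ, k', hk', rfl⟩ := hb
  exact ⟨mul_mem haQ hbQ, k * k', mul_mem hk hk', by group⟩

lemma Hset_inv {a : A} (ha : a ∈ Hset Q K c) : a⁻¹ ∈ Hset Q K c := by
  obtain ⟨haQ, k, hk, rfl⟩ := ha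
  exact ⟨inv_mem haQ, k⁻¹, inv_mem hk, by group⟩

lemma PHset_subset_Q (hPQ : P ≤ Q) : PHset P Q K c ⊆ (Q : Set A) := by
  rintro a ⟨p, hp, η, hη, rfl⟩
  exact mul_mem (hPQ hp) hη.1

lemma PHset_of_P {p : A} (hp : p ∈ P) : p ∈ PHset P Q K c :=
  ⟨p, hp, 1, Hset_one, (mul_one p).symm⟩

lemma PHset_of_H {η : A} (hη : η ∈ Hset Q K c) : η ∈ PHset P Q K c :=
  ⟨1, one_mem P, η, hη, (one_mul η).symm⟩

lemma PHset_mul (hPnormal : ∀ q ∈ Q, ∀ p ∈ P, q * p * q⁻¹ ∈ P)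
    {a b : A} (ha : a ∈ PHset P Q K c) (hb : b ∈ PHset P Q K c) :
    a * b ∈ PHset P Q K c := by
  obtain ⟨p, hp, η, hη, rfl⟩ := ha
  obtain ⟨p', hp', η', hη', rfl⟩ := hb
  exact ⟨p * (η * p' * η⁻¹), mul_mem hp (hPnormal η hη.1 p' hp'),
    η * η', Hset_mul hη hη', by group⟩

lemma PHset_inv (hPnormal : ∀ q ∈ Q, ∀ p ∈ P, q * p * q⁻¹ ∈ P)
    {a : A} (ha : a ∈ PHset P Q K c) : a⁻¹ ∈ PHset P Q K c := by
  obtain ⟨p, hp, η, hη, rfl⟩ := ha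
  refine ⟨η⁻¹ * p⁻¹ * η⁻¹⁻¹, hPnormal η⁻¹ (inv_mem hη.1) p⁻¹ (inv_mem hp),
    η⁻¹, Hset_inv hη, by group⟩

lemma mulc_mem {α : A} (hα : α ∈ PHset P Q K c) :
    α * c ∈ GammaPcKset Γ P K c := by
  obtain ⟨p, hp, η, ⟨hηQ, k, hk, rfl⟩, rfl⟩ := hα
  exact ⟨1, one_mem Γ, p, hp, k, hk, by group⟩

lemma rel2_equiv {X : Type*} [MulAction Γ X] :
    Equivalence (relGammaPcK P Γ K c (X := X)) := by
  constructor
  · intro w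
    exact ⟨1, 1, one_mem K, by simp, by simp⟩
  · rintro w w' ⟨γ, k, hk, h1, h2⟩
    refine ⟨γ⁻¹, k⁻¹, inv_mem hk, ?_, ?_⟩
    · rw [h1, inv_smul_smul]
    · rw [h2]; push_cast; group
  · rintro w w' w'' ⟨γ, k, hk, h1, h2⟩ ⟨γ', k', hk', h1', h2'⟩
    refine ⟨γ' * γ, k' * k, mul_mem hk' hk, ?_, ?_⟩
    · rw [h1', h1, smul_smul]
    · rw [h2', h2]; push_cast; group

end Aux

/-- Let `A` be a group, `Q ≤ A`, `P` normal in `Q`, `Γ ≤ Q`,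
`K ≤ A`, `c ∈ A`, and `H = Q ∩ cKc⁻¹`.  Let `X` carry a left `Γ`-action.  Then
`(x, α) ↦ (x, αc)` descends to a well-defined bijection from the orbit space of
`X × PH` under `(Γ ∩ PH) × H` onto the orbit space of `X × ΓPcK` under `Γ × K`. -/
theorem stmt6 {A : Type*} [Group A] (P Q Γ K : Subgroup A)
    (hPQ : P ≤ Q) (hPnormal : ∀ q ∈ Q, ∀ p ∈ P, q * p * q⁻¹ ∈ P) (hΓQ : Γ ≤ Q)
    (c : A) {X : Type*} [MulAction Γ X] :
    ∃ e : Quot (relPH P Q Γ K c (X := X)) ≃ Quot (relGammaPcK P Γ K c (X := X)),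
      ∀ (x : X) (α : A) (hα : α ∈ PHset P Q K c) (hαc : α * c ∈ GammaPcKset Γ P K c),
        e (Quot.mk _ (x, ⟨α, hα⟩)) = Quot.mk _ (x, ⟨α * c, hαc⟩) := by
  classical
  let g : (X × ↥(PHset P Q K c)) → Quot (relGammaPcK P Γ K c (X := X)) :=
    fun w => Quot.mk _ (w.1, ⟨(w.2 : A) * c, mulc_mem w.2.2⟩)
  have wd : ∀ w w', relPH P Q Γ K c w w' → g w = g w' := by
    rintro w w' ⟨γ, hγ, η, ⟨hηQ, k, hk, hηeq⟩, h1, h2⟩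
    apply Quot.sound
    refine ⟨γ, k, hk, h1, ?_⟩
    show (w'.2 : A) * c = (γ : A) * ((w.2 : A) * c) * k⁻¹
    rw [h2, hηeq]; group
  let F : Quot (relPH P Q Γ K c (X := X)) → Quot (relGammaPcK P Γ K c (X := X)) :=
    Quot.lift g wd
  have hsurj : Function.Surjective F := by
    intro b
    induction b using Quot.ind with
    | _ w =>
      obtain ⟨γ, hγ, p, hp, k, hk, hseq⟩ := w.2.2
      refine ⟨Quot.mk _ ((⟨γ, hγ⟩ : Γ)⁻¹ • w.1, ⟨p, PHset_of_P hp⟩), ?_⟩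
      show Quot.mk _ ((⟨γ, hγ⟩ : Γ)⁻¹ • w.1, (⟨p * c, _⟩ : ↥(GammaPcKset Γ P K c)))
        = Quot.mk _ w
      refine (Quot.sound ?_).symm
      refine ⟨(⟨γ, hγ⟩ : Γ)⁻¹, k, hk, ?_, ?_⟩
      · rfl
      · show p * c = (((⟨γ, hγ⟩ : Γ)⁻¹ : Γ) : A) * (w.2 : A) * k⁻¹
        rw [hseq]; push_cast; group
  have hinj : Function.Injective F := by
    intro a b
    induction a using Quot.ind with
    | _ w =>
      induction b using Quot.ind with
      | _ w' =>
        intro h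
        have h' : relGammaPcK P Γ K c (w.1, ⟨(w.2 : A) * c, mulc_mem w.2.2⟩)
            (w'.1, ⟨(w'.2 : A) * c, mulc_mem w'.2.2⟩) :=
          (rel2_equiv.eqvGen_iff).mp (Quot.eq.mp h)
        obtain ⟨γ, k, hk, h1, h2⟩ := h'
        have h1' : w'.1 = γ • w.1 := h1
        have h2' : (w'.2 : A) * c = (γ : A) * ((w.2 : A) * c) * k⁻¹ := h2
        have hw2 : (w'.2 : A) = (γ : A) * (w.2 : A) * (c * k * c⁻¹)⁻¹ := by
          have hc : (w'.2 : A) = ((w'.2 : A) * c) * c⁻¹ := by group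
          rw [hc, h2']; group
        have hηQ : c * k * c⁻¹ ∈ Q := by
          have hinvmem : (c * k * c⁻¹)⁻¹ ∈ Q := by
            have heq : (c * k * c⁻¹)⁻¹ = (w.2 : A)⁻¹ * (γ : A)⁻¹ * (w'.2 : A) := by
              rw [hw2]; group
            rw [heq]
            exact mul_mem (mul_mem (inv_mem (PHset_subset_Q hPQ w.2.2))
              (inv_mem (hΓQ γ.2))) (PHset_subset_Q hPQ w'.2.2)
          simpa using inv_mem hinvmem
        have hηH : c * k * c⁻¹ ∈ Hset Q K c := ⟨hηQ, k, hk, rfl⟩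
        have hγPH : (γ : A) ∈ PHset P Q K c := by
          have hγeq : (γ : A) = (w'.2 : A) * (c * k * c⁻¹) * (w.2 : A)⁻¹ := by
            rw [hw2]; group
          rw [hγeq]
          exact PHset_mul hPnormal (PHset_mul hPnormal w'.2.2 (PHset_of_H hηH))
            (PHset_inv hPnormal w.2.2)
        exact Quot.sound ⟨γ, hγPH, c * k * c⁻¹, hηH, h1', hw2⟩
  refine ⟨Equiv.ofBijective F ⟨hinj, hsurj⟩, ?_⟩
  intro x α hα hαc
  rfl
end

section
/- Let F be a field of characteristic zero, g ≥ 1, and V = F^{2g} with standard basis e₁,…,e_{2g}, equipped with the symplectic form ψ determined by: ψ(e_i, e_j) = 1 if i < j and i + j = 2g+1; ψ(e_i, e_j) = −1 if i > j and i + j = 2g+1; and ψ(e_i, e_j) = 0 if i + j ≠ 2g+1. Let GSp(V) be the group of linear automorphisms f of V such that ψ(f x, f y) = λ·ψ(x, y) for some λ ∈ Fˣ. For 0 ≤ m ≤ 2g write W_m = span(e₁,…,e_m). For 0 ≤ k ≤ g let R_k ⊆ GSp(V) be the subgroup of those f with f(e_j) − e_j ∈ W_{j−1} for 1 ≤ j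 ≤ k, f(e_j) − e_j ∈ W_k for k < j ≤ 2g−k, and f(e_j) − e_j ∈ W_{j−1} for 2g−k < j ≤ 2g. Suppose W ⊆ V is an isotropic subspace (ψ vanishes identically on W × W) of dimension h with f(W) = W for every f ∈ R_k. Then either h < k and W = W_h, or h ≥ k and W_k ⊆ W. -/
noncomputable section

/-- The standard symplectic form `ψ` on `F^{2g}`, determined (0-indexed) by
`ψ(e_i, e_j) = 1` if `i < j` and `i + j + 1 = 2g`, `ψ(e_i, e_j) = -1` if `i > j`
and `i + j + 1 = 2g`, and `ψ(e_i, e_j) = 0` otherwise. -/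
def psi (g : ℕ) (F : Type*) [Field F] (x y : Fin (2*g) → F) : F :=
  ∑ i : Fin (2*g), ∑ j : Fin (2*g),
    x i *
      (if (i : ℕ) + (j : ℕ) + 1 = 2*g then (if (i : ℕ) < (j : ℕ) then (1 : F) else -1) else 0)
      * y j

/-- `W_m = span(e₁, …, e_m)` (the span of the first `m` standard basis vectors). -/
def Wsub (g m : ℕ) (F : Type*) [Field F] : Submodule F (Fin (2*g) → F) :=
  Submodule.span F {v | ∃ i : Fin (2*g), (i : ℕ) < m ∧ v = Pi.single i 1}

/-- The unipotent subgroup `R_k ⊆ GSp(V)`: symplectic similitudes `f` with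
`f(e_j) − e_j ∈ W_{j−1}` for `1 ≤ j ≤ k`, `f(e_j) − e_j ∈ W_k` for `k < j ≤ 2g−k`,
and `f(e_j) − e_j ∈ W_{j−1}` for `2g−k < j ≤ 2g` (1-indexed `j`). -/
def RkSet (g k : ℕ) (F : Type*) [Field F] :
    Set ((Fin (2*g) → F) ≃ₗ[F] (Fin (2*g) → F)) :=
  {f | (∃ lam : Fˣ, ∀ x y, psi g F (f x) (f y) = (lam : F) * psi g F x y) ∧
    ∀ j : Fin (2*g),
      f (Pi.single j 1) - Pi.single j 1 ∈
        Wsub g (if (j : ℕ) < k then (j : ℕ) else if (j : ℕ) < 2*g - k then k else (j : ℕ)) F}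

/-- dual index -/
def dualIdx (g : ℕ) (j : Fin (2*g)) : Fin (2*g) := ⟨2*g-1-(j:ℕ), by have := j.2; omega⟩

lemma dualIdx_coe (g : ℕ) (j : Fin (2*g)) : ((dualIdx g j : Fin (2*g)) : ℕ) = 2*g-1-(j:ℕ) := rfl

lemma dualIdx_dualIdx (g : ℕ) (j : Fin (2*g)) : dualIdx g (dualIdx g j) = j := by
  have := j.2; exact Fin.ext (by simp [dualIdx_coe]; omega)

lemma psi_eq (g : ℕ) (F : Type*) [Field F] (x y : Fin (2*g) → F) :
    psi g F x y = ∑ i : Fin (2*g),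
      x i * (if 2*(i:ℕ)+1 < 2*g then (1:F) else -1) * y (dualIdx g i) := by
  unfold psi
  refine Finset.sum_congr rfl fun i _ => ?_
  rw [Finset.sum_eq_single (dualIdx g i)]
  · have hi := i.2
    have h1 : (i : ℕ) + ((dualIdx g i : Fin (2*g)) : ℕ) + 1 = 2*g := by
      rw [dualIdx_coe]; omega
    rw [if_pos h1]
    congr 2
    refine if_congr ?_ rfl rfl
    rw [dualIdx_coe]; omega
  · intro j _ hj
    have : ¬ ((i:ℕ) + (j:ℕ) + 1 = 2*g) := by
      intro h
      exact hj (Fin.ext (by rw [dualIdx_coe]; omega))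
    rw [if_neg this]; ring
  · intro h; exact absurd (Finset.mem_univ _) h

lemma psi_add_left (g : ℕ) (F : Type*) [Field F] (x x' y : Fin (2*g) → F) :
    psi g F (x + x') y = psi g F x y + psi g F x' y := by
  simp only [psi_eq, ← Finset.sum_add_distrib]
  exact Finset.sum_congr rfl fun i _ => by rw [Pi.add_apply]; split_ifs <;> ring

lemma psi_add_right (g : ℕ) (F : Type*) [Field F] (x y y' : Fin (2*g) → F) :
    psi g F x (y + y') = psi g F x y + psi g F x y' := by
  simp only [psi_eq, ← Finset.sum_add_distrib]
  exact Finset.sum_congr rfl fun i _ => by rw [Pi.add_apply]; split_ifs <;> ring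

lemma psi_single_left (g : ℕ) (F : Type*) [Field F] (i : Fin (2*g)) (a : F) (y : Fin (2*g) → F) :
    psi g F (Pi.single i a) y = a * (if 2*(i:ℕ)+1 < 2*g then (1:F) else -1) * y (dualIdx g i) := by
  rw [psi_eq, Finset.sum_eq_single i]
  · rw [Pi.single_eq_same]
  · intro j _ hj; rw [Pi.single_eq_of_ne hj]; ring
  · intro h; exact absurd (Finset.mem_univ _) h

lemma psi_single_right (g : ℕ) (F : Type*) [Field F] (x : Fin (2*g) → F) (j : Fin (2*g)) (b : F) :
    psi g F x (Pi.single j b) =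
      x (dualIdx g j) * (if 2*((dualIdx g j : Fin (2*g)):ℕ)+1 < 2*g then (1:F) else -1) * b := by
  rw [psi_eq, Finset.sum_eq_single (dualIdx g j)]
  · rw [dualIdx_dualIdx, Pi.single_eq_same]
  · intro i _ hi
    have : dualIdx g i ≠ j := by
      intro h; exact hi (by rw [← h, dualIdx_dualIdx])
    rw [Pi.single_eq_of_ne this]; ring
  · intro h; exact absurd (Finset.mem_univ _) h

/-- elementary nilpotent map -/
def elemN (g : ℕ) (F : Type*) [Field F] (a b : Fin (2*g)) (c : F) :
    (Fin (2*g) → F) →ₗ[F] (Fin (2*g) → F) where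
  toFun x := Pi.single a (x b * c)
  map_add' x y := by simp [add_mul, Pi.single_add]
  map_smul' r x := by
    simp only [RingHom.id_apply, smul_eq_mul]
    have h1 : (r • x) b * c = r • (x b * c) := by simp [smul_eq_mul, mul_assoc]
    rw [h1, Pi.single_smul]

@[simp] lemma elemN_apply (g : ℕ) (F : Type*) [Field F] (a b : Fin (2*g)) (c : F)
    (x : Fin (2*g) → F) : elemN g F a b c x = Pi.single a (x b * c) := rfl

/-- unipotent equivalence from square-zero map -/
def unipEquiv (F : Type*) [Field F] {M : Type*} [AddCommGroup M] [Module F M]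
    (N : M →ₗ[F] M) (hN : ∀ x, N (N x) = 0) : M ≃ₗ[F] M :=
  LinearEquiv.ofLinear (LinearMap.id + N) (LinearMap.id - N)
    (by ext x; simp [LinearMap.add_apply, LinearMap.sub_apply, map_sub, hN x])
    (by ext x; simp [LinearMap.add_apply, LinearMap.sub_apply, map_add, hN x])

@[simp] lemma unipEquiv_apply (F : Type*) [Field F] {M : Type*} [AddCommGroup M] [Module F M]
    (N : M →ₗ[F] M) (hN : ∀ x, N (N x) = 0) (x : M) : unipEquiv F N hN x = x + N x := rfl

lemma single_mem_Wsub (g m : ℕ) (F : Type*) [Field F] (i : Fin (2*g)) (c : F)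
    (hi : (i:ℕ) < m) : Pi.single i c ∈ Wsub g m F := by
  have : Pi.single i c = c • (Pi.single i 1 : Fin (2*g) → F) := by
    rw [← Pi.single_smul, smul_eq_mul, mul_one]
  rw [this]
  exact Submodule.smul_mem _ _ (Submodule.subset_span ⟨i, hi, rfl⟩)

lemma mem_Wsub_iff (g m : ℕ) (F : Type*) [Field F] (x : Fin (2*g) → F) :
    x ∈ Wsub g m F ↔ ∀ j : Fin (2*g), m ≤ (j:ℕ) → x j = 0 := by
  constructor
  · intro hx
    induction hx using Submodule.span_induction with
    | mem v hv =>
      obtain ⟨i, him, rfl⟩ := hv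
      intro j hj
      exact Pi.single_eq_of_ne (fun h => by simp [h] at hj; omega) 1
    | zero => intro j _; rfl
    | add u v _ _ hu hv =>
      intro j hj
      show (u + v) j = 0
      rw [Pi.add_apply, hu j hj, hv j hj, add_zero]
    | smul c u _ hu =>
      intro j hj
      show (c • u) j = 0
      rw [Pi.smul_apply, hu j hj, smul_zero]
  · intro hx
    have hxe : x = ∑ i : Fin (2*g), Pi.single i (x i) := (Finset.univ_sum_single x).symm
    rw [hxe]
    refine Submodule.sum_mem _ fun i _ => ?_
    by_cases hi : (i:ℕ) < m
    · exact single_mem_Wsub g m F i (x i) hi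
    · rw [hx i (by omega), Pi.single_zero]; exact Submodule.zero_mem _

lemma finrank_Wsub (g m : ℕ) (F : Type*) [Field F] (hm : m ≤ 2*g) :
    Module.finrank F (Wsub g m F) = m := by
  have hset : {v : Fin (2*g) → F | ∃ i : Fin (2*g), (i : ℕ) < m ∧ v = Pi.single i 1} =
      Set.range (fun i : Fin m => (Pi.single (Fin.castLE hm i) (1:F) : Fin (2*g) → F)) := by
    ext v
    constructor
    · rintro ⟨i, him, rfl⟩
      exact ⟨⟨(i:ℕ), him⟩, by congr 1⟩
    · rintro ⟨i', rfl⟩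
      exact ⟨Fin.castLE hm i', i'.2, rfl⟩
  have hli : LinearIndependent F (fun i : Fin m => (Pi.single (Fin.castLE hm i) (1:F) : Fin (2*g) → F)) := by
    have hb := (Pi.basisFun F (Fin (2*g))).linearIndependent
    have : (fun i : Fin m => (Pi.single (Fin.castLE hm i) (1:F) : Fin (2*g) → F)) =
        (Pi.basisFun F (Fin (2*g))) ∘ (Fin.castLE hm) := by
      funext i; simp [Pi.basisFun_apply]
    rw [this]
    exact hb.comp _ (Fin.castLE_injective hm)
  rw [Wsub, hset, finrank_span_eq_card hli, Fintype.card_fin]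

/-- Let `F` be a field of characteristic zero, `g ≥ 1`,
`0 ≤ k ≤ g`, and let `W ⊆ F^{2g}` be an isotropic subspace of dimension `h` with
`f(W) = W` for every `f ∈ R_k`.  Then either `h < k` and `W = W_h`, or `h ≥ k`
and `W_k ⊆ W`. -/
theorem stmt7 (F : Type*) [Field F] [CharZero F] (g k h : ℕ) (hg : 1 ≤ g) (hk : k ≤ g)
    (W : Submodule F (Fin (2*g) → F))
    (hiso : ∀ x ∈ W, ∀ y ∈ W, psi g F x y = 0)
    (hdim : Module.finrank F W = h)
    (hstab : ∀ f ∈ RkSet g k F,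
      W.map (f : (Fin (2*g) → F) →ₗ[F] (Fin (2*g) → F)) = W) :
    (h < k ∧ W = Wsub g h F) ∨ (k ≤ h ∧ Wsub g k F ≤ W) := by
  classical
  have scale : ∀ (a : Fin (2*g)) (c : F), c ≠ 0 → Pi.single a c ∈ W →
      (Pi.single a 1 : Fin (2*g) → F) ∈ W := by
    intro a c hc hmem
    have h1 : (Pi.single a 1 : Fin (2*g) → F) = c⁻¹ • (Pi.single a c : Fin (2*g) → F) := by
      rw [← Pi.single_smul, smul_eq_mul, inv_mul_cancel₀ hc]
    rw [h1]; exact Submodule.smul_mem _ _ hmem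
  -- key closure lemma
  have key : ∀ N : (Fin (2*g) → F) →ₗ[F] (Fin (2*g) → F), ∀ hNN : (∀ x, N (N x) = 0),
      (∀ x y, psi g F (x + N x) (y + N y) = psi g F x y) →
      (∀ j : Fin (2*g), N (Pi.single j 1) ∈
        Wsub g (if (j:ℕ) < k then (j:ℕ) else if (j:ℕ) < 2*g - k then k else (j:ℕ)) F) →
      ∀ w ∈ W, N w ∈ W := by
    intro N hNN hpsi hcol w hw
    have hf : unipEquiv F N hNN ∈ RkSet g k F := by
      refine ⟨⟨1, fun x y => ?_⟩, fun j => ?_⟩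
      · simpa using hpsi x y
      · simpa using hcol j
    have hmap := hstab _ hf
    have hfw : (unipEquiv F N hNN) w ∈ W := by
      rw [← hmap]
      exact Submodule.mem_map_of_mem hw
    have hsub : (unipEquiv F N hNN) w - w ∈ W := Submodule.sub_mem _ hfw hw
    simpa using hsub
  -- Step A
  have stepA : ∀ i : Fin (2*g), (i:ℕ) < k → ∀ w ∈ W, w (dualIdx g i) = 0 := by
    intro i hik w hw
    by_contra hne
    have hi2 : (i:ℕ) < 2*g := i.2
    have hne' : dualIdx g i ≠ i := by
      intro hEq
      have := congrArg Fin.val hEq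
      rw [dualIdx_coe] at this; omega
    have hsign1 : (if 2*(i:ℕ)+1 < 2*g then (1:F) else -1) = 1 := if_pos (by omega)
    have hsign2 : (if 2*((dualIdx g i : Fin (2*g)):ℕ)+1 < 2*g then (1:F) else -1) = -1 :=
      if_neg (by rw [dualIdx_coe]; omega)
    have hNN : ∀ x, elemN g F i (dualIdx g i) 1 (elemN g F i (dualIdx g i) 1 x) = 0 := by
      intro x
      simp [elemN_apply, Pi.single_eq_of_ne hne']
    have hsymp : ∀ x y, psi g F (x + elemN g F i (dualIdx g i) 1 x)
        (y + elemN g F i (dualIdx g i) 1 y) = psi g F x y := by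
      intro x y
      simp only [elemN_apply, psi_add_left, psi_add_right, psi_single_left, psi_single_right,
        hsign1, hsign2, Pi.single_eq_of_ne hne', Pi.add_apply, dualIdx_dualIdx]
      ring
    have hcol : ∀ j : Fin (2*g), elemN g F i (dualIdx g i) 1 (Pi.single j 1) ∈
        Wsub g (if (j:ℕ) < k then (j:ℕ) else if (j:ℕ) < 2*g - k then k else (j:ℕ)) F := by
      intro j
      rw [elemN_apply]
      by_cases hj : j = dualIdx g i
      · subst hj
        rw [Pi.single_eq_same]
        have hb1 : ¬ ((( dualIdx g i : Fin (2*g)):ℕ) < k) := by rw [dualIdx_coe]; omega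
        have hb2 : ¬ ((( dualIdx g i : Fin (2*g)):ℕ) < 2*g - k) := by rw [dualIdx_coe]; omega
        rw [if_neg hb1, if_neg hb2]
        exact single_mem_Wsub _ _ _ _ _ (by rw [dualIdx_coe]; omega)
      · rw [Pi.single_eq_of_ne (fun hEq => hj hEq.symm), zero_mul, Pi.single_zero]
        exact Submodule.zero_mem _
    have hNw := key _ hNN hsymp hcol w hw
    rw [elemN_apply] at hNw
    have h0 := hiso _ hNw _ hw
    rw [psi_single_left, hsign1] at h0
    simp only [mul_one, one_mul] at h0
    exact hne (mul_self_eq_zero.mp h0)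
  -- Step B
  have stepB : ∀ (i j : Fin (2*g)), (i:ℕ) < k → (i:ℕ) < (j:ℕ) → ∀ w ∈ W,
      Pi.single i (w j) ∈ W := by
    intro i j hik hij w hw
    have hi2 : (i:ℕ) < 2*g := i.2
    have hj2 : (j:ℕ) < 2*g := j.2
    by_cases hdual : (j:ℕ) = 2*g-1-(i:ℕ)
    · have hjd : j = dualIdx g i := Fin.ext (by rw [dualIdx_coe]; omega)
      rw [hjd, stepA i hik w hw, Pi.single_zero]
      exact Submodule.zero_mem _
    · -- auxiliary inequalities
      have neOf : ∀ (a b : Fin (2*g)), (a:ℕ) ≠ (b:ℕ) → a ≠ b :=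
        fun a b hab h => hab (congrArg Fin.val h)
      have hne_ij : i ≠ j := neOf _ _ (by omega)
      have hne_ji : j ≠ i := neOf _ _ (by omega)
      have hne_dj_j : dualIdx g j ≠ j := neOf _ _ (by rw [dualIdx_coe]; omega)
      have hne_j_dj : j ≠ dualIdx g j := neOf _ _ (by rw [dualIdx_coe]; omega)
      have hne_di_i : dualIdx g i ≠ i := neOf _ _ (by rw [dualIdx_coe]; omega)
      have hne_dj_di : dualIdx g j ≠ dualIdx g i := neOf _ _ (by rw [dualIdx_coe, dualIdx_coe]; omega)
      have hne_di_dj : dualIdx g i ≠ dualIdx g j := neOf _ _ (by rw [dualIdx_coe, dualIdx_coe]; omega)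
      have hne_i_dj : i ≠ dualIdx g j := neOf _ _ (by rw [dualIdx_coe]; omega)
      have hne_di_j : dualIdx g i ≠ j := neOf _ _ (by rw [dualIdx_coe]; omega)
      have hne_j_di : j ≠ dualIdx g i := neOf _ _ (by rw [dualIdx_coe]; omega)
      -- the nilpotent map
      set c' : F := if 2*((dualIdx g j : Fin (2*g)):ℕ)+1 < 2*g then (1:F) else -1 with hc'
      have hNapp : ∀ x, (elemN g F i j 1 + elemN g F (dualIdx g j) (dualIdx g i) c') x =
          Pi.single i (x j * 1) + Pi.single (dualIdx g j) (x (dualIdx g i) * c') := fun x => rfl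
      have hNN : ∀ x, (elemN g F i j 1 + elemN g F (dualIdx g j) (dualIdx g i) c')
          ((elemN g F i j 1 + elemN g F (dualIdx g j) (dualIdx g i) c') x) = 0 := by
        intro x
        rw [hNapp, hNapp]
        have e1 : (Pi.single i (x j * 1) + Pi.single (dualIdx g j) (x (dualIdx g i) * c')
            : Fin (2*g) → F) j = 0 := by
          rw [Pi.add_apply, Pi.single_eq_of_ne hne_ji, Pi.single_eq_of_ne hne_j_dj, add_zero]
        have e2 : (Pi.single i (x j * 1) + Pi.single (dualIdx g j) (x (dualIdx g i) * c')
            : Fin (2*g) → F) (dualIdx g i) = 0 := by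
          rw [Pi.add_apply, Pi.single_eq_of_ne hne_di_i, Pi.single_eq_of_ne hne_di_dj, add_zero]
        rw [e1, e2, zero_mul, zero_mul, Pi.single_zero, Pi.single_zero, add_zero]
      -- signs
      have hSi : (if 2*(i:ℕ)+1 < 2*g then (1:F) else -1) = 1 := if_pos (by omega)
      have hSdi : (if 2*((dualIdx g i : Fin (2*g)):ℕ)+1 < 2*g then (1:F) else -1) = -1 :=
        if_neg (by rw [dualIdx_coe]; omega)
      have hsymp : ∀ x y, psi g F (x + (elemN g F i j 1 + elemN g F (dualIdx g j) (dualIdx g i) c') x)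
          (y + (elemN g F i j 1 + elemN g F (dualIdx g j) (dualIdx g i) c') y) = psi g F x y := by
        intro x y
        rw [hNapp, hNapp]
        simp only [psi_add_left, psi_add_right, psi_single_left, psi_single_right,
          dualIdx_dualIdx, hSi, hSdi, Pi.add_apply, Pi.single_eq_of_ne hne_di_i,
          Pi.single_eq_of_ne hne_ji, Pi.single_eq_of_ne hne_di_dj,
          Pi.single_eq_of_ne hne_j_dj]
        by_cases hcase : 2*(j:ℕ)+1 < 2*g
        · have hSj : (if 2*(j:ℕ)+1 < 2*g then (1:F) else -1) = 1 := if_pos hcase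
          have hSdj : (if 2*((dualIdx g j : Fin (2*g)):ℕ)+1 < 2*g then (1:F) else -1) = -1 :=
            if_neg (by rw [dualIdx_coe]; omega)
          rw [hc', hSj, hSdj]
          ring
        · have hSj : (if 2*(j:ℕ)+1 < 2*g then (1:F) else -1) = -1 := if_neg hcase
          have hSdj : (if 2*((dualIdx g j : Fin (2*g)):ℕ)+1 < 2*g then (1:F) else -1) = 1 :=
            if_pos (by rw [dualIdx_coe]; omega)
          rw [hc', hSj, hSdj]
          ring
      have hcol : ∀ jj : Fin (2*g),
          (elemN g F i j 1 + elemN g F (dualIdx g j) (dualIdx g i) c') (Pi.single jj 1) ∈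
          Wsub g (if (jj:ℕ) < k then (jj:ℕ) else if (jj:ℕ) < 2*g - k then k else (jj:ℕ)) F := by
        intro jj
        rw [hNapp]
        by_cases h1 : jj = j
        · subst h1
          rw [Pi.single_eq_same, Pi.single_eq_of_ne hne_di_j, zero_mul, Pi.single_zero, add_zero,
            one_mul]
          split_ifs with hb1 hb2
          · exact single_mem_Wsub _ _ _ _ _ (by omega)
          · exact single_mem_Wsub _ _ _ _ _ (by omega)
          · exact single_mem_Wsub _ _ _ _ _ (by omega)
        · by_cases h2 : jj = dualIdx g i
          · subst h2
            rw [Pi.single_eq_same, Pi.single_eq_of_ne hne_j_di, zero_mul, Pi.single_zero, zero_add,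
              one_mul]
            have hb1 : ¬ (((dualIdx g i : Fin (2*g)):ℕ) < k) := by rw [dualIdx_coe]; omega
            have hb2 : ¬ (((dualIdx g i : Fin (2*g)):ℕ) < 2*g - k) := by rw [dualIdx_coe]; omega
            rw [if_neg hb1, if_neg hb2]
            exact single_mem_Wsub _ _ _ _ _ (by rw [dualIdx_coe, dualIdx_coe]; omega)
          · rw [Pi.single_eq_of_ne (fun hEq => h1 hEq.symm),
              Pi.single_eq_of_ne (fun hEq => h2 hEq.symm), zero_mul, zero_mul,
              Pi.single_zero, Pi.single_zero, add_zero]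
            exact Submodule.zero_mem _
      have hNw := key _ hNN hsymp hcol w hw
      rw [hNapp, stepA i hik w hw, zero_mul, Pi.single_zero, add_zero, mul_one] at hNw
      exact hNw
  -- endgame
  by_cases hex : ∃ w ∈ W, ∃ j : Fin (2*g), k ≤ (j:ℕ) ∧ w j ≠ 0
  · obtain ⟨w, hw, j, hkj, hwj⟩ := hex
    right
    have hWk : Wsub g k F ≤ W := by
      rw [Wsub, Submodule.span_le]
      rintro v ⟨i, hik, rfl⟩
      exact scale i (w j) hwj (stepB i j hik (by omega) w hw)
    refine ⟨?_, hWk⟩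
    have hfr := Submodule.finrank_mono hWk
    rwa [finrank_Wsub g k F (by omega), hdim] at hfr
  · push_neg at hex
    by_cases hall : ∀ i : Fin (2*g), (i:ℕ) < k → (Pi.single i 1 : Fin (2*g) → F) ∈ W
    · right
      have hWk : Wsub g k F ≤ W := by
        rw [Wsub, Submodule.span_le]
        rintro v ⟨i, hik, rfl⟩
        exact hall i hik
      have hWk' : W ≤ Wsub g k F := fun x hx =>
        (mem_Wsub_iff g k F x).mpr (fun j hj => hex x hx j hj)
      have hWeq : W = Wsub g k F := le_antisymm hWk' hWk
      have hhk : h = k := by rw [← hdim, hWeq, finrank_Wsub g k F (by omega)]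
      exact ⟨le_of_eq hhk.symm, hWk⟩
    · left
      push_neg at hall
      have hQ : ∃ m : ℕ, ∃ _ : m < 2*g,
          m < k ∧ (Pi.single (⟨m, by omega⟩ : Fin (2*g)) 1 : Fin (2*g) → F) ∉ W := by
        obtain ⟨i, hik, hiW⟩ := hall
        exact ⟨(i:ℕ), i.2, hik, hiW⟩
      obtain ⟨hm2g, hmk, hmnot⟩ := Nat.find_spec hQ
      set m := Nat.find hQ with hmdef
      have hmin : ∀ i : Fin (2*g), (i:ℕ) < m → (Pi.single i 1 : Fin (2*g) → F) ∈ W := by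
        intro i him
        by_contra hnot
        exact Nat.find_min hQ him ⟨i.2, by omega, hnot⟩
      have hhigh : ∀ w ∈ W, ∀ j : Fin (2*g), m < (j:ℕ) → w j = 0 := by
        intro w hw j hmj
        by_contra hne
        exact hmnot (scale _ (w j) hne (stepB ⟨m, hm2g⟩ j hmk hmj w hw))
      have hWm : W ≤ Wsub g m F := by
        intro w hw
        rw [mem_Wsub_iff]
        intro j hj
        rcases Nat.lt_or_ge m (j:ℕ) with hlt | hge
        · exact hhigh w hw j hlt
        · have hjm : (j:ℕ) = m := by omega
          by_contra hne
          have hw'W : (w - ∑ i : Fin (2*g),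
              if (i:ℕ) < m then Pi.single i (w i) else 0) ∈ W := by
            refine Submodule.sub_mem _ hw (Submodule.sum_mem _ fun i _ => ?_)
            by_cases hi : (i:ℕ) < m
            · rw [if_pos hi]
              have h1 : (Pi.single i (w i) : Fin (2*g) → F)
                  = (w i) • (Pi.single i 1 : Fin (2*g) → F) := by
                rw [← Pi.single_smul, smul_eq_mul, mul_one]
              rw [h1]
              exact Submodule.smul_mem _ _ (hmin i hi)
            · rw [if_neg hi]
              exact Submodule.zero_mem _
          have hcoord : ∀ jj : Fin (2*g), (w - ∑ i : Fin (2*g),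
              if (i:ℕ) < m then Pi.single i (w i) else 0) jj
              = w jj - (if (jj:ℕ) < m then w jj else 0) := by
            intro jj
            rw [Pi.sub_apply, Finset.sum_apply]
            congr 1
            rw [Finset.sum_eq_single jj]
            · split_ifs with hjj
              · rw [Pi.single_eq_same]
              · rfl
            · intro b _ hb
              split_ifs with hbb
              · exact Pi.single_eq_of_ne (Ne.symm hb) _
              · rfl
            · intro hh
              exact absurd (Finset.mem_univ _) hh
          have hw'eq : (w - ∑ i : Fin (2*g),
              if (i:ℕ) < m then Pi.single i (w i) else 0) = Pi.single j (w j) := by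
            funext jj
            rcases lt_trichotomy ((jj:ℕ)) m with h1 | h1 | h1
            · rw [hcoord jj, if_pos h1, sub_self]
              have hjj : jj ≠ j := fun hEq => by
                have := congrArg Fin.val hEq; omega
              exact (Pi.single_eq_of_ne (M := fun _ : Fin (2*g) => F) hjj (w j)).symm
            · have hjje : jj = j := Fin.ext (by omega)
              rw [hcoord jj, if_neg (by omega), sub_zero, hjje, Pi.single_eq_same]
            · rw [hcoord jj, if_neg (by omega), sub_zero, hhigh w hw jj (by omega)]
              have hjj : jj ≠ j := fun hEq => by
                have := congrArg Fin.val hEq; omega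
              exact (Pi.single_eq_of_ne (M := fun _ : Fin (2*g) => F) hjj (w j)).symm
          have hsingle : Pi.single j (w j) ∈ W := hw'eq ▸ hw'W
          have hj1 : (Pi.single j 1 : Fin (2*g) → F) ∈ W := scale j (w j) hne hsingle
          have hjfin : j = (⟨m, hm2g⟩ : Fin (2*g)) := Fin.ext hjm
          rw [hjfin] at hj1
          exact hmnot hj1
      have hWm' : Wsub g m F ≤ W := by
        rw [Wsub, Submodule.span_le]
        rintro v ⟨i, him, rfl⟩
        exact hmin i him
      have hWeq : W = Wsub g m F := le_antisymm hWm hWm'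
      have hhm : h = m := by rw [← hdim, hWeq, finrank_Wsub g m F (by omega)]
      exact ⟨by omega, by rw [hhm, hWeq]⟩
end
end
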